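/- Any n-node finite connected graph G with diameter at most D admits, for every collection of parts P_1,...,P_k, a shortcut with congestion at most √n and dilation at most 2D + √n; in particular every graph admits shortcuts of quality O(D + √n). (Such a shortcut is obtained by setting H_i = ∅ for each part with |P_i| ≤ √n and H_i = T, a breadth-first-search spanning tree of G, for each other part.) -/

import Mathlib

open SimpleGraph

/-- The subgraph `G[P] + H`: the union of the subgraph of `G` induced by `P` with the
subgraph `H`. -/
def partGraph {V : Type} (G : SimpleGraph V) (P : Set V) (H : G.Subgraph) : G.Subgraph :=
  (⊤ : G.Subgraph).induce P ⊔ H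

/-- **Observation.** Any `n`-node finite connected graph `G` with diameter at most `D`
admits, for every collection of parts `P 0, ..., P (k-1)`, a shortcut with congestion at
most `√n` and dilation at most `2D + √n`; in particular every graph admits shortcuts of
quality `O(D + √n)`. -/
theorem shortcuts_general_graphs
    {V : Type} [Fintype V] (G : SimpleGraph V) (hG : G.Connected)
    (D : ℕ) (hD : ∀ u v : V, G.dist u v ≤ D)
    (k : ℕ) (P : Fin k → Set V)
    (hdisj : Pairwise fun i j => Disjoint (P i) (P j))
    (hconn : ∀ i, (G.induce (P i)).Connected) :
    ∃ H : Fin k → G.Subgraph,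
      (∀ e : Sym2 V,
        ({i : Fin k | e ∈ (H i).edgeSet}.ncard : ℝ) ≤ Real.sqrt (Fintype.card V)) ∧
      (∀ i, (partGraph G (P i) (H i)).coe.Connected ∧
        ∀ u v, ((partGraph G (P i) (H i)).coe.dist u v : ℝ) ≤
          2 * D + Real.sqrt (Fintype.card V)) := by
  classical
  set n := Fintype.card V with hn
  set r := Real.sqrt n with hr
  have hr0 : 0 ≤ r := Real.sqrt_nonneg _
  have hV : Nonempty V := hG.nonempty
  have hn1 : 1 ≤ n := Fintype.card_pos
  have hrpos : 0 < r := Real.sqrt_pos.mpr (by exact_mod_cast hn1)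
  have hrr : r * r = (n : ℝ) := Real.mul_self_sqrt (by positivity)
  -- the "big" parts
  set T : Finset (Fin k) := Finset.univ.filter (fun i => r < ((P i).ncard : ℝ)) with hT
  -- number of big parts is at most √n
  have hTcard : (T.card : ℝ) ≤ r := by
    rcases T.eq_empty_or_nonempty with h | h
    · simp [h]; positivity
    · have hsum : ∑ i ∈ T, ((P i).toFinset.card) ≤ n := by
        rw [← Finset.card_biUnion]
        · exact Finset.card_le_univ _
        · intro i hi j hj hij
          exact Set.disjoint_toFinset.mpr (hdisj hij)
      have hsumR : (T.card : ℝ) * r < (n : ℝ) := by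
        calc (T.card : ℝ) * r = ∑ _i ∈ T, r := by
              rw [Finset.sum_const, nsmul_eq_mul]
          _ < ∑ i ∈ T, ((P i).toFinset.card : ℝ) := by
              apply Finset.sum_lt_sum_of_nonempty h
              intro i hi
              have := (Finset.mem_filter.mp hi).2
              rwa [Set.ncard_eq_toFinset_card'] at this
          _ ≤ (n : ℝ) := by exact_mod_cast hsum
      nlinarith
  refine ⟨fun i => if r < ((P i).ncard : ℝ) then ⊤ else ⊥, ?_, ?_⟩
  · -- congestion
    intro e
    have hsub : {i : Fin k | e ∈ ((if r < ((P i).ncard : ℝ) then (⊤ : G.Subgraph)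
        else ⊥)).edgeSet} ⊆ (T : Set (Fin k)) := by
      intro i hi
      simp only [Set.mem_setOf_eq] at hi
      by_cases hb : r < ((P i).ncard : ℝ)
      · simpa [hT] using hb
      · simp [hb] at hi
    calc ({i : Fin k | e ∈ ((if r < ((P i).ncard : ℝ) then (⊤ : G.Subgraph)
            else ⊥)).edgeSet}.ncard : ℝ)
        ≤ ((T : Set (Fin k)).ncard : ℝ) := by
          exact_mod_cast Set.ncard_le_ncard hsub (Set.toFinite _)
      _ = (T.card : ℝ) := by rw [Set.ncard_coe_finset]
      _ ≤ r := hTcard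
  · -- dilation
    intro i
    by_cases hb : r < ((P i).ncard : ℝ)
    · -- big part: use the whole graph
      beta_reduce
      rw [if_pos hb]
      have hEq : partGraph G (P i) (⊤ : G.Subgraph) = ⊤ := by
        simp [partGraph]
      rw [hEq]
      constructor
      · exact (Iso.connected_iff (Subgraph.topIso (G := G))).mpr hG
      · intro u v
        -- transport a shortest walk of G into (⊤ : G.Subgraph).coe
        have hreach : G.Reachable (u : V) (v : V) := hG _ _
        obtain ⟨p, hp⟩ := hreach.exists_walk_length_eq_dist
        have : (⊤ : G.Subgraph).coe.dist u v ≤ D := by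
          have hmap : ((⊤ : G.Subgraph).coe.dist u v : ℕ) ≤
              (p.map (Subgraph.topIso (G := G)).symm.toHom).length := by
            have : ((Subgraph.topIso (G := G)).symm u) = u := rfl
            exact SimpleGraph.dist_le _
          rw [SimpleGraph.Walk.length_map, hp] at hmap
          exact hmap.trans (hD _ _)
        calc ((⊤ : G.Subgraph).coe.dist u v : ℝ) ≤ (D : ℝ) := by exact_mod_cast this
          _ ≤ 2 * D + r := by
              have hD0 : (0 : ℝ) ≤ (D : ℝ) := Nat.cast_nonneg _
              linarith
    · -- small part: induced subgraph alone, diameter < |P i| ≤ √n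
      beta_reduce
      rw [if_neg hb]
      have hEq : partGraph G (P i) (⊥ : G.Subgraph) = (⊤ : G.Subgraph).induce (P i) := by
        simp [partGraph]
      rw [hEq, ← induce_eq_coe_induce_top]
      have hc := hconn i
      refine ⟨hc, fun u v => ?_⟩
      have hreach : (G.induce (P i)).Reachable u v := hc _ _
      obtain ⟨p, hp⟩ := hreach.exists_walk_length_eq_dist
      have hdist : (G.induce (P i)).dist u v ≤ p.bypass.length :=
        SimpleGraph.dist_le _
      have hlen : p.bypass.length < Fintype.card (P i) :=
        p.bypass_isPath.length_lt
      have hcard : (Fintype.card (P i) : ℝ) ≤ r := by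
        push_neg at hb
        rwa [Set.ncard_eq_toFinset_card', Set.toFinset_card] at hb
      have : ((G.induce (P i)).dist u v : ℝ) < (Fintype.card (P i) : ℝ) := by
        exact_mod_cast lt_of_le_of_lt hdist hlen
      have := this.trans_le hcard
      have h2D : (0 : ℝ) ≤ 2 * D := by positivity
      exact (this.trans_le (by linarith : r ≤ 2 * D + r)).le
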